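/- Let ρ ∈ ℝ^d \ {0}, and let H(v) = −(1/2)σ²∘v∘v + β^T v + ρ with σᵢ > 0. Suppose B : [0,∞) → ℝ^d solves B' = H(B), B(0) = 0, and suppose span{B(τ) : τ ≥ 0} = span(ρ) (i.e., the term structure kernel has codimension 1 with S^T ℝ = span ρ). Then for every ξ ⊥ ρ, ξ^T H(sρ) = 0 for all s ∈ ℝ. -/

import Mathlib

open Matrix

/-- Key step in Corollary 3.2: if the Riccati solution `B` (with `B(0) = 0`,
`B' = H(B)` on `[0,∞)`) spans only `span(ρ)`, then for every `ξ ⊥ ρ` the function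
`s ↦ ξᵀ H(sρ)` vanishes identically on `ℝ`. -/
theorem stmt_16 {d : ℕ} (ρ : Fin d → ℝ) (hρ : ρ ≠ 0)
    (σ : Fin d → ℝ) (hσ : ∀ i, 0 < σ i) (β : Matrix (Fin d) (Fin d) ℝ)
    (H : (Fin d → ℝ) → (Fin d → ℝ))
    (hH : ∀ v i, H v i = -(1 / 2) * (σ i) ^ 2 * (v i) ^ 2 + β.transpose.mulVec v i + ρ i)
    (B : ℝ → (Fin d → ℝ)) (hB0 : B 0 = 0)
    (hB : ∀ τ ∈ Set.Ici (0 : ℝ), HasDerivWithinAt B (H (B τ)) (Set.Ici 0) τ)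
    (hspan : Submodule.span ℝ (B '' Set.Ici 0) = Submodule.span ℝ {ρ}) :
    ∀ ξ : Fin d → ℝ, (∑ i, ξ i * ρ i = 0) → ∀ s : ℝ, ∑ i, ξ i * H (s • ρ) i = 0 := by
  intro ξ hξρ
  -- norm of ρ squared is nonzero
  set K : ℝ := ∑ i, ρ i ^ 2 with hK
  have hKpos : 0 < K := by
    rcases Function.ne_iff.mp hρ with ⟨i, hi⟩
    have hi' : ρ i ≠ 0 := by simpa using hi
    have : 0 < ρ i ^ 2 := by positivity
    exact lt_of_lt_of_le this (Finset.single_le_sum (f := fun i => ρ i ^ 2)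
      (fun j _ => by positivity) (Finset.mem_univ i))
  -- define the coefficient c
  set c : ℝ → ℝ := fun τ => (∑ i, B τ i * ρ i) / K with hc
  -- B τ = c τ • ρ for τ ≥ 0
  have hBc : ∀ τ ∈ Set.Ici (0 : ℝ), B τ = c τ • ρ := by
    intro τ hτ
    have hmem : B τ ∈ Submodule.span ℝ (B '' Set.Ici 0) :=
      Submodule.subset_span ⟨τ, hτ, rfl⟩
    rw [hspan, Submodule.mem_span_singleton] at hmem
    obtain ⟨a, ha⟩ := hmem
    have hca : c τ = a := by
      show (∑ i, B τ i * ρ i) / K = a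
      have : (∑ i, B τ i * ρ i) = a * K := by
        rw [← ha, hK, Finset.mul_sum]
        refine Finset.sum_congr rfl fun i _ => ?_
        simp [Pi.smul_apply, smul_eq_mul]; ring
      rw [this]
      field_simp
    rw [hca, ha]
  -- the coefficients of the quadratic
  set a : ℝ := ∑ i, ξ i * (-(1 / 2) * σ i ^ 2 * ρ i ^ 2) with hadef
  set b : ℝ := ∑ i, ξ i * β.transpose.mulVec ρ i with hbdef
  -- ξᵀ H (s • ρ) = a s² + b s
  have hquad : ∀ s : ℝ, ∑ i, ξ i * H (s • ρ) i = a * s ^ 2 + b * s := by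
    intro s
    have h1 : ∀ i, ξ i * H (s • ρ) i =
        (ξ i * (-(1 / 2) * σ i ^ 2 * ρ i ^ 2)) * s ^ 2
          + (ξ i * β.transpose.mulVec ρ i) * s + ξ i * ρ i := by
      intro i
      rw [hH]
      have hm : β.transpose.mulVec (s • ρ) i = s * β.transpose.mulVec ρ i := by
        rw [Matrix.mulVec_smul]; simp [smul_eq_mul]
      rw [hm]
      simp only [Pi.smul_apply, smul_eq_mul]
      ring
    calc ∑ i, ξ i * H (s • ρ) i
        = ∑ i, ((ξ i * (-(1 / 2) * σ i ^ 2 * ρ i ^ 2)) * s ^ 2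
            + (ξ i * β.transpose.mulVec ρ i) * s + ξ i * ρ i) :=
          Finset.sum_congr rfl fun i _ => h1 i
      _ = a * s ^ 2 + b * s + ∑ i, ξ i * ρ i := by
          rw [Finset.sum_add_distrib, Finset.sum_add_distrib,
            ← Finset.sum_mul, ← Finset.sum_mul]
      _ = a * s ^ 2 + b * s := by rw [hξρ]; ring
  -- ξᵀ B τ = 0 for τ ≥ 0
  have hξB : ∀ τ ∈ Set.Ici (0 : ℝ), ∑ i, ξ i * B τ i = 0 := by
    intro τ hτ
    rw [hBc τ hτ]
    have : ∑ i, ξ i * (c τ • ρ) i = c τ * ∑ i, ξ i * ρ i := by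
      rw [Finset.mul_sum]
      exact Finset.sum_congr rfl fun i _ => by simp [smul_eq_mul]; ring
    rw [this, hξρ, mul_zero]
  -- ξᵀ H (B τ) = 0 for τ ≥ 0, by differentiating the zero function τ ↦ ξᵀ B τ
  have hkey : ∀ τ ∈ Set.Ici (0 : ℝ), ∑ i, ξ i * H (B τ) i = 0 := by
    intro τ hτ
    have hd : HasDerivWithinAt (fun t => ∑ i, ξ i * B t i)
        (∑ i, ξ i * H (B τ) i) (Set.Ici 0) τ := by
      have := hB τ hτ
      rw [hasDerivWithinAt_pi] at this
      exact HasDerivWithinAt.fun_sum fun i _ => (this i).const_mul (ξ i)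
    have hd0 : HasDerivWithinAt (fun t => ∑ i, ξ i * B t i)
        (0 : ℝ) (Set.Ici 0) τ := by
      refine (hasDerivWithinAt_const τ (Set.Ici (0:ℝ)) (0:ℝ)).congr ?_ (hξB τ hτ)
      intro t ht
      exact hξB t ht
    have hu : UniqueDiffWithinAt ℝ (Set.Ici (0:ℝ)) τ := uniqueDiffOn_Ici 0 τ hτ
    have := hd.derivWithin hu
    rw [hd0.derivWithin hu] at this
    exact this.symm
  -- f (c τ) = 0 for τ ≥ 0
  have hfc : ∀ τ ∈ Set.Ici (0 : ℝ), a * c τ ^ 2 + b * c τ = 0 := by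
    intro τ hτ
    have := hkey τ hτ
    rw [hBc τ hτ, hquad] at this
    exact this
  -- there exists τ₀ ≥ 0 with c τ₀ ≠ 0
  have hex : ∃ τ₀ ∈ Set.Ici (0 : ℝ), c τ₀ ≠ 0 := by
    by_contra h
    push_neg at h
    have hB0' : ∀ τ ∈ Set.Ici (0 : ℝ), B τ = 0 := by
      intro τ hτ
      rw [hBc τ hτ, h τ hτ, zero_smul]
    have himg : B '' Set.Ici 0 ⊆ {(0 : Fin d → ℝ)} := by
      rintro _ ⟨τ, hτ, rfl⟩
      exact hB0' τ hτ
    have : ρ ∈ Submodule.span ℝ (B '' Set.Ici 0) := by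
      rw [hspan]; exact Submodule.mem_span_singleton_self ρ
    have hle : Submodule.span ℝ (B '' Set.Ici 0) ≤ ⊥ := by
      rw [← Submodule.span_zero_singleton (R := ℝ) (M := Fin d → ℝ)]
      exact Submodule.span_mono himg
    exact hρ (hle this)
  obtain ⟨τ₀, hτ₀, hc₀⟩ := hex
  -- c is continuous on [0, τ₀]
  have hBcont : ContinuousOn B (Set.Ici 0) := fun τ hτ => (hB τ hτ).continuousWithinAt
  have hccont : ContinuousOn c (Set.Icc 0 τ₀) := by
    apply ContinuousOn.div_const
    apply ContinuousOn.mono _ (Set.Icc_subset_Ici_self)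
    apply continuousOn_finset_sum
    intro i _
    exact ((continuousOn_pi.mp hBcont) i).mul continuousOn_const
  have hc0 : c 0 = 0 := by simp [hc, hB0]
  -- by IVT, c τ₀ / 2 is attained
  have hmid : ∃ τ₁ ∈ Set.Icc (0:ℝ) τ₀, c τ₁ = c τ₀ / 2 := by
    rcases lt_or_gt_of_ne hc₀ with hneg | hpos
    · have : c τ₀ / 2 ∈ Set.Icc (c τ₀) (c 0) :=
        ⟨by linarith, by rw [hc0]; linarith⟩
      have := intermediate_value_Icc' hτ₀ hccont this
      obtain ⟨τ₁, hτ₁, hval⟩ := this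
      exact ⟨τ₁, hτ₁, hval⟩
    · have : c τ₀ / 2 ∈ Set.Icc (c 0) (c τ₀) :=
        ⟨by rw [hc0]; linarith, by linarith⟩
      have := intermediate_value_Icc hτ₀ hccont this
      obtain ⟨τ₁, hτ₁, hval⟩ := this
      exact ⟨τ₁, hτ₁, hval⟩
  obtain ⟨τ₁, hτ₁, hval⟩ := hmid
  -- the two equations
  have e1 : a * c τ₀ ^ 2 + b * c τ₀ = 0 := hfc τ₀ hτ₀
  have e2 : a * (c τ₀ / 2) ^ 2 + b * (c τ₀ / 2) = 0 := by
    have := hfc τ₁ (Set.Icc_subset_Ici_self hτ₁)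
    rwa [hval] at this
  have ha0 : a = 0 := by
    have h3 : a * c τ₀ ^ 2 = 0 := by linear_combination 2 * e1 - 4 * e2
    rcases mul_eq_zero.mp h3 with h | h
    · exact h
    · exact absurd (pow_eq_zero_iff (n := 2) (by norm_num) |>.mp h) hc₀
  have hb0 : b = 0 := by
    rw [ha0] at e1
    simp at e1
    rcases e1 with h | h
    · exact h
    · exact absurd h hc₀
  intro s
  rw [hquad, ha0, hb0]
  ring
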